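/- Let ∂ be a ℤ-linear map from chains on S to chains on T, let A be a connected chain with ‖A‖ = n ≥ 1, and let s₀ be in the support of A. Then there exist chains B₁, …, Bₙ with Bₙ = A such that: ‖Bₖ‖ = k for each k; B₁ is supported on {s₀} with coefficient ±1; each Bₖ is a subchain of Bₖ₊₁ (and of A); and ‖∂Bₖ₊₁‖ < ‖∂Bₖ‖ + ‖∂(Bₖ₊₁ − Bₖ)‖ for each 1 ≤ k < n. -/
import Mathlib


/-- The volume of a chain `A : S →₀ ℤ`: the sum of the absolute values of its
coefficients. -/
def vol {S : Type*} (A : S →₀ ℤ) : ℕ := ∑ s ∈ A.support, (A s).natAbs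

/-- `B` is a subchain of `A` when `‖A‖ = ‖B‖ + ‖A - B‖`. -/
def Subchain {S : Type*} (B A : S →₀ ℤ) : Prop := vol A = vol B + vol (A - B)

/-- Given a boundary map `d`, `B` is a component of `A` if `B` is a subchain of `A`
and `d B` is a subchain of `d A`. -/
def Component {S T : Type*} (d : (S →₀ ℤ) →ₗ[ℤ] (T →₀ ℤ)) (B A : S →₀ ℤ) : Prop :=
  Subchain B A ∧ Subchain (d B) (d A)

/-- A chain is connected if its only components are `0` and itself. -/
def Connected {S T : Type*} (d : (S →₀ ℤ) →ₗ[ℤ] (T →₀ ℤ)) (A : S →₀ ℤ) : Prop :=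
  ∀ B : S →₀ ℤ, Component d B A → B = 0 ∨ B = A

section helpers

variable {S T : Type*}

lemma vol_eq_sum (A : S →₀ ℤ) {F : Finset S} (h : A.support ⊆ F) :
    vol A = ∑ s ∈ F, (A s).natAbs :=
  Finset.sum_subset h (fun s _ hs => by
    simp [Finsupp.notMem_support_iff.mp hs])

lemma subchain_iff (B A : S →₀ ℤ) :
    Subchain B A ↔ ∀ s, (A s).natAbs = (B s).natAbs + (A s - B s).natAbs := by
  classical
  set F := A.support ∪ B.support ∪ (A - B).support with hF
  have hA : A.support ⊆ F := (Finset.subset_union_left.trans Finset.subset_union_left)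
  have hB : B.support ⊆ F := (Finset.subset_union_right.trans Finset.subset_union_left)
  have hAB : (A - B).support ⊆ F := Finset.subset_union_right
  have tri : ∀ s ∈ F, (A s).natAbs ≤ (B s).natAbs + ((A - B) s).natAbs := by
    intro s _; rw [Finsupp.sub_apply]; omega
  rw [Subchain, vol_eq_sum A hA, vol_eq_sum B hB, vol_eq_sum (A - B) hAB,
    ← Finset.sum_add_distrib]
  constructor
  · intro h s
    by_cases hs : s ∈ F
    · have := (Finset.sum_eq_sum_iff_of_le tri).mp h s hs
      rw [Finsupp.sub_apply] at this; omega
    · have h1 : A s = 0 := Finsupp.notMem_support_iff.mp (fun c => hs (hA c))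
      have h2 : B s = 0 := Finsupp.notMem_support_iff.mp (fun c => hs (hB c))
      simp [h1, h2]
  · intro h
    refine Finset.sum_congr rfl fun s _ => ?_
    rw [Finsupp.sub_apply]; exact h s

lemma vol_eq_zero {f : S →₀ ℤ} (h : vol f = 0) : f = 0 := by
  ext s
  by_cases hs : s ∈ f.support
  · have := Finset.sum_eq_zero_iff.mp h s hs
    simp only [Finsupp.coe_zero, Pi.zero_apply]
    omega
  · simpa using Finsupp.notMem_support_iff.mp hs

lemma eq_of_subchain_vol (B A : S →₀ ℤ) (h : Subchain B A) (hv : vol B = vol A) :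
    B = A := by
  rw [Subchain, hv] at h
  have : A - B = 0 := vol_eq_zero (by omega)
  exact (sub_eq_zero.mp this).symm

lemma vol_add_le (u v : S →₀ ℤ) : vol (u + v) ≤ vol u + vol v := by
  classical
  set F := (u + v).support ∪ u.support ∪ v.support with hF
  have h1 : (u + v).support ⊆ F := (Finset.subset_union_left.trans Finset.subset_union_left)
  have h2 : u.support ⊆ F := (Finset.subset_union_right.trans Finset.subset_union_left)
  have h3 : v.support ⊆ F := Finset.subset_union_right
  rw [vol_eq_sum _ h1, vol_eq_sum _ h2, vol_eq_sum _ h3, ← Finset.sum_add_distrib]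
  refine Finset.sum_le_sum fun s _ => ?_
  rw [Finsupp.add_apply]; omega

lemma vol_single (s : S) (c : ℤ) : vol (Finsupp.single s c) = c.natAbs := by
  classical
  by_cases hc : c = 0
  · simp [hc, vol]
  · rw [vol, Finsupp.support_single_ne_zero _ hc]
    simp

lemma d_eq_sum (d : (S →₀ ℤ) →ₗ[ℤ] (T →₀ ℤ)) (f : S →₀ ℤ) :
    d f = ∑ s ∈ f.support, f s • d (Finsupp.single s 1) := by
  conv_lhs => rw [← Finsupp.sum_single f]
  rw [Finsupp.sum, map_sum]
  refine Finset.sum_congr rfl fun s _ => ?_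
  rw [← map_smul, Finsupp.smul_single, smul_eq_mul, mul_one]

end helpers

lemma step_lemma {S T : Type*} (d : (S →₀ ℤ) →ₗ[ℤ] (T →₀ ℤ)) (A C : S →₀ ℤ)
    (hconn : Connected d A) (hsub : Subchain C A) (h1 : 1 ≤ vol C)
    (h2 : vol C < vol A) :
    ∃ s : S, ∃ c : ℤ,
      Subchain C (C + Finsupp.single s c) ∧
      Subchain (C + Finsupp.single s c) A ∧
      vol (C + Finsupp.single s c) = vol C + 1 ∧
      vol (d (C + Finsupp.single s c)) <
        vol (d C) + vol (d (Finsupp.single s c)) := by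
  classical
  by_contra hcon
  push_neg at hcon
  have hpt : ∀ s, (A s).natAbs = (C s).natAbs + (A s - C s).natAbs :=
    (subchain_iff C A).mp hsub
  -- the sign of each remaining cell
  set c : S → ℤ := fun s => if 0 < A s - C s then 1 else -1 with hc
  -- basic properties for remaining cells
  have key : ∀ s ∈ (A - C).support,
      Subchain C (C + Finsupp.single s (c s)) ∧
      Subchain (C + Finsupp.single s (c s)) A ∧
      vol (C + Finsupp.single s (c s)) = vol C + 1 := by
    intro s hs
    have hne : A s - C s ≠ 0 := by
      have := Finsupp.mem_support_iff.mp hs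
      rwa [Finsupp.sub_apply] at this
    have hcs : (0 < A s - C s ∧ c s = 1) ∨ (A s - C s < 0 ∧ c s = -1) := by
      by_cases h : 0 < A s - C s
      · left; exact ⟨h, if_pos h⟩
      · right; exact ⟨by omega, if_neg h⟩
    have ptw : ∀ s', ((C + Finsupp.single s (c s)) s' = C s' ∧ s' ≠ s) ∨
        (s' = s ∧ (C + Finsupp.single s (c s)) s' = C s + c s) := by
      intro s'
      by_cases h : s' = s
      · right; subst h; simp [Finsupp.add_apply, Finsupp.single_apply]
      · left
        refine ⟨?_, h⟩
        rw [Finsupp.add_apply, Finsupp.single_apply, if_neg (fun hh => h hh.symm), add_zero]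
    have sub1 : Subchain C (C + Finsupp.single s (c s)) := by
      rw [subchain_iff]
      intro s'
      rcases ptw s' with ⟨h, _⟩ | ⟨h, hval⟩
      · rw [h]; omega
      · subst h
        rw [hval]
        have := hpt s'
        rcases hcs with ⟨h3, h4⟩ | ⟨h3, h4⟩ <;> rw [h4] <;> omega
    have sub2 : Subchain (C + Finsupp.single s (c s)) A := by
      rw [subchain_iff]
      intro s'
      rcases ptw s' with ⟨h, _⟩ | ⟨h, hval⟩
      · rw [h]; exact hpt s'
      · subst h
        rw [hval]
        have := hpt s'
        rcases hcs with ⟨h3, h4⟩ | ⟨h3, h4⟩ <;> rw [h4] <;> omega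
    refine ⟨sub1, sub2, ?_⟩
    have : vol (C + Finsupp.single s (c s)) =
        vol C + vol ((C + Finsupp.single s (c s)) - C) := sub1
    rw [this, add_sub_cancel_left, vol_single]
    rcases hcs with ⟨_, h4⟩ | ⟨_, h4⟩ <;> rw [h4] <;> rfl
  -- from the negation: no cancellation for each remaining cell
  have compat : ∀ s ∈ (A - C).support, ∀ t,
      ((0:ℤ) ≤ d C t ∧ 0 ≤ d (Finsupp.single s (c s)) t) ∨
        (d C t ≤ 0 ∧ d (Finsupp.single s (c s)) t ≤ 0) := by
    intro s hs
    obtain ⟨sub1, sub2, hv⟩ := key s hs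
    have hge := hcon s (c s) sub1 sub2 hv
    have hle : vol (d (C + Finsupp.single s (c s))) ≤
        vol (d C) + vol (d (Finsupp.single s (c s))) := by
      rw [map_add]; exact vol_add_le _ _
    have heq : Subchain (d C) (d (C + Finsupp.single s (c s))) := by
      rw [map_add] at hge hle
      rw [Subchain, map_add, add_sub_cancel_left]
      omega
    have := (subchain_iff _ _).mp heq
    intro t
    have h5 := this t
    rw [map_add, Finsupp.add_apply] at h5
    omega
  -- conclude d C is a subchain of d A
  have dsub : Subchain (d C) (d A) := by
    rw [subchain_iff]
    intro t
    have hdecomp : (d A - d C) t = (d (A - C)) t := by rw [← map_sub]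
    have hsum : (d (A - C)) t =
        ∑ s ∈ (A - C).support, (A - C) s * (d (Finsupp.single s 1)) t := by
      rw [d_eq_sum d (A - C), Finsupp.finset_sum_apply]
      exact Finset.sum_congr rfl fun s _ => by rw [Finsupp.smul_apply, smul_eq_mul]
    have hcompatsum : ((0:ℤ) ≤ d C t ∧ 0 ≤ (d (A - C)) t) ∨
        (d C t ≤ 0 ∧ (d (A - C)) t ≤ 0) := by
      rw [hsum]
      refine Finset.sum_induction _
        (fun y => ((0:ℤ) ≤ d C t ∧ 0 ≤ y) ∨ (d C t ≤ 0 ∧ y ≤ 0))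
        (fun a b ha hb => by omega) (by omega) ?_
      intro s hs
      have hcc : c s * c s = 1 := by
        by_cases h : 0 < A s - C s
        · rw [show c s = 1 from if_pos h]; norm_num
        · rw [show c s = -1 from if_neg h]; norm_num
      have hterm : (A - C) s * (d (Finsupp.single s 1)) t =
          ((A - C) s * c s) * (d (Finsupp.single s (c s))) t := by
        have hsg : (Finsupp.single s (c s)) = c s • Finsupp.single s 1 := by
          rw [Finsupp.smul_single, smul_eq_mul, mul_one]
        rw [hsg, map_smul, Finsupp.smul_apply, smul_eq_mul]
        linear_combination (-((A - C) s * (d (Finsupp.single s 1)) t)) * hcc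
      rw [hterm]
      have hm : 0 ≤ (A - C) s * c s := by
        have hne : A s - C s ≠ 0 := by
          have := Finsupp.mem_support_iff.mp hs
          rwa [Finsupp.sub_apply] at this
        rw [Finsupp.sub_apply]
        by_cases h : 0 < A s - C s
        · rw [show c s = 1 from if_pos h, mul_one]; omega
        · rw [show c s = -1 from if_neg h, mul_neg_one]; omega
      rcases compat s hs t with ⟨ha, hb⟩ | ⟨ha, hb⟩
      · exact Or.inl ⟨ha, mul_nonneg hm hb⟩
      · exact Or.inr ⟨ha, mul_nonpos_of_nonneg_of_nonpos hm hb⟩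
    have hAt : d A t = d C t + (d (A - C)) t := by
      rw [map_sub, Finsupp.sub_apply]; ring
    omega
  have hcomp : Component d C A := ⟨hsub, dsub⟩
  rcases hconn C hcomp with h | h
  · rw [h] at h1; simp [vol] at h1
  · rw [h] at h2; omega

/-- A connected chain `A` of volume `n ≥ 1` can be built up cell by cell from any
point `s₀` of its support: there are subchains `B₁ ⊆ B₂ ⊆ ⋯ ⊆ Bₙ = A` with
`‖Bₖ‖ = k`, `B₁ = ±δ_{s₀}`, and each added cell sharing boundary with the previous
stage. -/
theorem exists_connected_buildup {S T : Type*} (d : (S →₀ ℤ) →ₗ[ℤ] (T →₀ ℤ))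
    (A : S →₀ ℤ) (n : ℕ) (hn : 1 ≤ n) (hvol : vol A = n)
    (hconn : Connected d A) (s₀ : S) (hs₀ : s₀ ∈ A.support) :
    ∃ B : Fin n → (S →₀ ℤ),
      B ⟨n - 1, by omega⟩ = A ∧
      (∀ k : Fin n, vol (B k) = (k : ℕ) + 1) ∧
      (B ⟨0, by omega⟩ = Finsupp.single s₀ 1 ∨
        B ⟨0, by omega⟩ = Finsupp.single s₀ (-1)) ∧
      (∀ k : Fin n, Subchain (B k) A) ∧
      (∀ (k : ℕ) (h : k + 1 < n),
        Subchain (B ⟨k, by omega⟩) (B ⟨k + 1, h⟩) ∧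
        vol (d (B ⟨k + 1, h⟩)) <
          vol (d (B ⟨k, by omega⟩)) +
            vol (d (B ⟨k + 1, h⟩ - B ⟨k, by omega⟩))) := by
  classical
  suffices H : ∀ k : ℕ, 1 ≤ k → k ≤ n → ∃ B : Fin k → (S →₀ ℤ),
      (∀ j : Fin k, vol (B j) = (j : ℕ) + 1) ∧
      (∀ h0 : 0 < k, B ⟨0, h0⟩ = Finsupp.single s₀ 1 ∨
        B ⟨0, h0⟩ = Finsupp.single s₀ (-1)) ∧
      (∀ j : Fin k, Subchain (B j) A) ∧
      (∀ (j : ℕ) (h : j + 1 < k),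
        Subchain (B ⟨j, by omega⟩) (B ⟨j + 1, h⟩) ∧
        vol (d (B ⟨j + 1, h⟩)) <
          vol (d (B ⟨j, by omega⟩)) + vol (d (B ⟨j + 1, h⟩ - B ⟨j, by omega⟩))) by
    obtain ⟨B, hv, h0, hsub, hcons⟩ := H n hn le_rfl
    have hlast : B ⟨n - 1, by omega⟩ = A := by
      apply eq_of_subchain_vol _ _ (hsub _)
      rw [hv ⟨n - 1, by omega⟩]
      have : ((⟨n - 1, by omega⟩ : Fin n) : ℕ) = n - 1 := rfl
      rw [this]
      omega
    exact ⟨B, hlast, hv, h0 (by omega), hsub, fun k h => hcons k h⟩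
  intro k hk
  induction k, hk using Nat.le_induction with
  | base =>
    intro _
    have hA0 : A s₀ ≠ 0 := Finsupp.mem_support_iff.mp hs₀
    set c : ℤ := if 0 < A s₀ then 1 else -1 with hc
    have hcs : (0 < A s₀ ∧ c = 1) ∨ (A s₀ < 0 ∧ c = -1) := by
      by_cases h : 0 < A s₀
      · left; exact ⟨h, if_pos h⟩
      · right; exact ⟨by omega, if_neg h⟩
    refine ⟨fun _ => Finsupp.single s₀ c, ?_, ?_, ?_, ?_⟩
    · intro j
      rw [vol_single]
      have : (j : ℕ) = 0 := by omega
      rcases hcs with ⟨_, h4⟩ | ⟨_, h4⟩ <;> rw [h4, this] <;> rfl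
    · intro _
      rcases hcs with ⟨_, h4⟩ | ⟨_, h4⟩
      · left; rw [h4]
      · right; rw [h4]
    · intro _
      rw [subchain_iff]
      intro s'
      by_cases h : s' = s₀
      · subst h
        rw [Finsupp.single_apply, if_pos rfl]
        rcases hcs with ⟨h3, h4⟩ | ⟨h3, h4⟩ <;> rw [h4] <;> omega
      · rw [Finsupp.single_apply, if_neg (fun hh => h hh.symm)]
        omega
    · intro j h
      omega
  | succ k hk1 ih =>
    intro hkn
    obtain ⟨B, hv, h0, hsub, hcons⟩ := ih (by omega)
    set C : S →₀ ℤ := B ⟨k - 1, by omega⟩ with hC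
    have hvC : vol C = k := by
      have h5 := hv ⟨k - 1, by omega⟩
      have h6 : ((⟨k - 1, by omega⟩ : Fin k) : ℕ) = k - 1 := rfl
      rw [h6] at h5
      rw [← hC] at h5
      omega
    obtain ⟨s, c, hCD, hDA, hvD, hlt⟩ :=
      step_lemma d A C hconn (hsub _) (by omega) (by omega)
    set D : S →₀ ℤ := C + Finsupp.single s c with hD
    refine ⟨fun j : Fin (k + 1) => if h : (j : ℕ) < k then B ⟨j, h⟩ else D,
      ?_, ?_, ?_, ?_⟩
    · intro j
      by_cases h : (j : ℕ) < k
      · simp only [dif_pos h]; exact hv ⟨j, h⟩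
      · simp only [dif_neg h]
        have hj : (j : ℕ) = k := by omega
        rw [hj, hvD, hvC]
    · intro _
      simp only [dif_pos (show 0 < k by omega)]
      exact h0 (by omega)
    · intro j
      by_cases h : (j : ℕ) < k
      · simp only [dif_pos h]; exact hsub ⟨j, h⟩
      · simp only [dif_neg h]; exact hDA
    · intro j hj
      by_cases h : j + 1 < k
      · have hjk : j < k := by omega
        simp only [dif_pos h, dif_pos hjk]
        exact hcons j h
      · have hjk : j + 1 = k := by omega
        have hjlt : j < k := by omega
        simp only [dif_pos hjlt, dif_neg (by omega : ¬ (j + 1 < k))]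
        have hBC : B ⟨j, hjlt⟩ = C := by
          have hj' : j = k - 1 := by omega
          subst hj'
          rfl
        rw [hBC]
        have hDC : D - C = Finsupp.single s c := by rw [hD, add_sub_cancel_left]
        rw [hDC]
        exact ⟨hCD, hlt⟩
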